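/- Let φ : ℝ^d → ℝ be a convex differentiable function with gradient T = ∇φ, and let a_1, b_1, a_2, b_2 ≥ 0. For points x_1, …, x_m ∈ ℝ^d (with the cyclic convention x_{m+1} := x_1), define u_i := a_1 x_i + b_1 T(x_i) and v_i := a_2 x_i + b_2 T(x_i). Then Σ_{i=1}^{m} ⟨u_{i+1}, v_{i+1} − v_i⟩ ≥ 0. -/

import Mathlib

lemma grad_subgrad {d : ℕ} {φ : EuclideanSpace ℝ (Fin d) → ℝ}
    (hconv : ConvexOn ℝ Set.univ φ) (hdiff : Differentiable ℝ φ)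
    (p q : EuclideanSpace ℝ (Fin d)) :
    (inner ℝ (gradient φ p) (q - p) : ℝ) ≤ φ q - φ p := by
  have hgrad : HasFDerivAt φ ((InnerProductSpace.toDual ℝ _) (gradient φ p)) p :=
    hasGradientAt_iff_hasFDerivAt.mp (hdiff p).hasGradientAt
  set L : ℝ → EuclideanSpace ℝ (Fin d) := fun t => p + t • (q - p) with hL
  have hLd : HasDerivAt L (q - p) 0 := by
    simpa [hL] using ((hasDerivAt_id (0:ℝ)).smul_const (q - p)).const_add p
  have hg : HasDerivAt (φ ∘ L) (inner ℝ (gradient φ p) (q - p) : ℝ) 0 := by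
    have hgrad' : HasFDerivAt φ ((InnerProductSpace.toDual ℝ _) (gradient φ p)) (L 0) := by
      simpa [hL] using hgrad
    have := hgrad'.comp_hasDerivAt 0 hLd
    simpa [hL] using this
  have hgc : ConvexOn ℝ Set.univ (φ ∘ L) := by
    have := hconv.comp_affineMap (AffineMap.lineMap p q)
    have heq : (φ ∘ (AffineMap.lineMap p q : ℝ →ᵃ[ℝ] EuclideanSpace ℝ (Fin d))) = φ ∘ L := by
      funext t; simp [hL, AffineMap.lineMap_apply, Function.comp]
      rw [add_comm]
    rw [heq] at this
    simpa using this
  have := hgc.le_slope_of_hasDerivAt (Set.mem_univ 0) (Set.mem_univ 1) zero_lt_one hg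
  simpa [slope, hL] using this



/-- For a convex differentiable `φ : ℝ^d → ℝ` with gradient `T = ∇φ`,
nonnegative coefficients `a₁, b₁, a₂, b₂ ≥ 0`, and a cyclic sequence `x 0, …, x (m-1)`
with `x m = x 0`, setting `u i = a₁ • x i + b₁ • T (x i)` and
`v i = a₂ • x i + b₂ • T (x i)`, the cyclic sum `Σ ⟨u (i+1), v (i+1) - v i⟩` is
nonnegative. -/
theorem cyclic_sum_affine_gradient_nonneg
    (d : ℕ) (φ : EuclideanSpace ℝ (Fin d) → ℝ)
    (hconv : ConvexOn ℝ Set.univ φ) (hdiff : Differentiable ℝ φ)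
    (a₁ b₁ a₂ b₂ : ℝ) (ha₁ : 0 ≤ a₁) (hb₁ : 0 ≤ b₁) (ha₂ : 0 ≤ a₂) (hb₂ : 0 ≤ b₂)
    (m : ℕ) (hm : 1 ≤ m) (x : ℕ → EuclideanSpace ℝ (Fin d)) (hx : x m = x 0)
    (u v : ℕ → EuclideanSpace ℝ (Fin d))
    (hu : ∀ i, u i = a₁ • x i + b₁ • gradient φ (x i))
    (hv : ∀ i, v i = a₂ • x i + b₂ • gradient φ (x i)) :
    0 ≤ ∑ i ∈ Finset.range m, (inner ℝ (u (i + 1)) (v (i + 1) - v i) : ℝ) := by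
  set T : ℕ → EuclideanSpace ℝ (Fin d) := fun i => gradient φ (x i) with hT
  set g : ℕ → ℝ := fun i =>
    a₁ * a₂ * (‖x i‖ ^ 2 / 2) + b₁ * b₂ * (‖T i‖ ^ 2 / 2)
      + a₁ * b₂ * ((inner ℝ (x i) (T i) : ℝ) - φ (x i)) + a₂ * b₁ * φ (x i) with hg
  have key : ∀ i, g (i + 1) - g i ≤ (inner ℝ (u (i + 1)) (v (i + 1) - v i) : ℝ) := by
    intro i
    have h3 : φ (x (i+1)) - φ (x i) ≤ (inner ℝ (T (i+1)) (x (i+1) - x i) : ℝ) := by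
      have := grad_subgrad hconv hdiff (x (i+1)) (x i)
      have hsym : (inner ℝ (gradient φ (x (i+1))) (x i - x (i+1)) : ℝ)
          = - (inner ℝ (T (i+1)) (x (i+1) - x i) : ℝ) := by
        rw [hT]; rw [← inner_neg_right]; congr 1; abel
      rw [hsym] at this; linarith
    have h4 : (inner ℝ (T i) (x (i+1) - x i) : ℝ) ≤ φ (x (i+1)) - φ (x i) := by
      simpa [hT] using grad_subgrad hconv hdiff (x i) (x (i+1))
    have e1 : (inner ℝ (x (i+1)) (x (i+1) - x i) : ℝ)
        = ‖x (i+1)‖^2/2 - ‖x i‖^2/2 + ‖x (i+1) - x i‖^2/2 := by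
      rw [inner_sub_right, real_inner_self_eq_norm_sq]
      rw [@norm_sub_sq_real]; ring
    have e2 : (inner ℝ (T (i+1)) (T (i+1) - T i) : ℝ)
        = ‖T (i+1)‖^2/2 - ‖T i‖^2/2 + ‖T (i+1) - T i‖^2/2 := by
      rw [inner_sub_right, real_inner_self_eq_norm_sq]
      rw [@norm_sub_sq_real]; ring
    have e4 : (inner ℝ (x (i+1)) (T (i+1) - T i) : ℝ)
        = ((inner ℝ (x (i+1)) (T (i+1)) : ℝ) - (inner ℝ (x i) (T i) : ℝ))
          - (inner ℝ (T i) (x (i+1) - x i) : ℝ) + (inner ℝ (x i) (T i) : ℝ)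
          - (inner ℝ (x i) (T i) : ℝ) := by
      rw [inner_sub_right, inner_sub_right, real_inner_comm (T i) (x (i+1)),
        real_inner_comm (T i) (x i)]
      ring
    have expand : (inner ℝ (u (i + 1)) (v (i + 1) - v i) : ℝ)
        = a₁ * a₂ * (inner ℝ (x (i+1)) (x (i+1) - x i) : ℝ)
          + a₁ * b₂ * (inner ℝ (x (i+1)) (T (i+1) - T i) : ℝ)
          + b₁ * a₂ * (inner ℝ (T (i+1)) (x (i+1) - x i) : ℝ)
          + b₁ * b₂ * (inner ℝ (T (i+1)) (T (i+1) - T i) : ℝ) := by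
      rw [hu, hv, hv, hT]
      simp only [inner_add_left, inner_sub_right, inner_add_right,
        real_inner_smul_left, real_inner_smul_right]
      ring
    rw [expand, e1, e2, e4]
    simp only [hg]
    have hn1 : (0:ℝ) ≤ ‖x (i+1) - x i‖^2/2 := by positivity
    have hn2 : (0:ℝ) ≤ ‖T (i+1) - T i‖^2/2 := by positivity
    nlinarith [mul_nonneg ha₁ ha₂, mul_nonneg hb₁ hb₂, mul_nonneg ha₁ hb₂,
      mul_nonneg ha₂ hb₁, mul_nonneg (mul_nonneg ha₁ ha₂) hn1,
      mul_nonneg (mul_nonneg hb₁ hb₂) hn2,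
      mul_le_mul_of_nonneg_left h3 (mul_nonneg ha₂ hb₁),
      mul_le_mul_of_nonneg_left h4 (mul_nonneg ha₁ hb₂)]
  calc (0:ℝ) = g m - g 0 := by rw [hg]; simp [hT, hx]
    _ = ∑ i ∈ Finset.range m, (g (i+1) - g i) := (Finset.sum_range_sub g m).symm
    _ ≤ _ := Finset.sum_le_sum fun i _ => key i
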